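/- Let n ≥ 2 be an integer and let [a:c] and [b:d] be vertices of the Farey graph G3(n) such that ad − bc ≡ 0 (mod n). Then the number of walks of length 2 in G3(n) between [a:c] and [b:d] equals n if [a:c] = [b:d], and equals 0 otherwise. -/

import Mathlib

/-- The equivalence relation identifying `(a,c)` with `(-a,-c)` on the set of pairs of
elements of `ℤ/nℤ` generating the unit ideal. -/
def FareySetoid (n : ℕ) : Setoid {p : ZMod n × ZMod n // IsCoprime p.1 p.2} where
  r p q := p.1 = q.1 ∨ p.1 = -q.1
  iseqv := by
    constructor
    · intro p; exact Or.inl rfl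
    · rintro p q (h | h)
      · exact Or.inl h.symm
      · right; rw [h, neg_neg]
    · rintro p q s (h1 | h1) (h2 | h2)
      · exact Or.inl (h1.trans h2)
      · right; rw [h1, h2]
      · right; rw [h1, h2]
      · left; rw [h1, h2, neg_neg]

/-- The vertices of the Farey graph `G3(n)`: classes `[a:c]` of pairs `(a,c) ∈ (ℤ/nℤ)²`
generating the unit ideal, with `(a,c) ~ (-a,-c)`. -/
def FareyVertex (n : ℕ) := Quotient (FareySetoid n)

/-- The vertex `[a:c]` of the Farey graph. -/
def FareyVertex.mk (n : ℕ) (a c : ZMod n) (h : IsCoprime a c) : FareyVertex n :=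
  Quotient.mk (FareySetoid n) ⟨(a, c), h⟩

/-- The Farey graph `G3(n)`: vertices `[a:c]` and `[b:d]` are adjacent iff
`ad - bc ≡ ±1 (mod n)`. -/
def FareyGraph (n : ℕ) : SimpleGraph (FareyVertex n) where
  Adj u v := u ≠ v ∧ ∃ a c b d : ZMod n,
    (∃ h, u = FareyVertex.mk n a c h) ∧ (∃ h, v = FareyVertex.mk n b d h) ∧
    (a * d - b * c = 1 ∨ a * d - b * c = -1)
  symm := by
    constructor
    rintro u v ⟨hne, a, c, b, d, hu, hv, h⟩
    refine ⟨hne.symm, b, d, a, c, hv, hu, ?_⟩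
    rcases h with h | h
    · right; linear_combination -h
    · left; linear_combination -h
  loopless := ⟨fun u h => h.1 rfl⟩

instance (n : ℕ) [NeZero n] : Finite (FareyVertex n) := Quotient.finite _

/-- A pair of integers `b, d` with `gcd(b, d, n) = 1` yields a pair generating the unit
ideal of `ℤ/nℤ`. -/
lemma isCoprime_zmod_of_gcd {n : ℕ} {b d : ℤ} (h : Int.gcd b (Int.gcd d n) = 1) :
    IsCoprime (b : ZMod n) (d : ZMod n) := by
  obtain ⟨u, v, huv⟩ := Int.isCoprime_iff_gcd_eq_one.mpr h
  have hgcd : ((Int.gcd d n : ℕ) : ℤ) = d * Int.gcdA d n + n * Int.gcdB d n :=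
    Int.gcd_eq_gcd_ab d (n : ℤ)
  refine ⟨(u : ZMod n), ((v * Int.gcdA d (n : ℤ) : ℤ) : ZMod n), ?_⟩
  have huv' : u * b + (v * Int.gcdA d (n : ℤ)) * d + (v * Int.gcdB d (n : ℤ)) * n = 1 := by
    rw [← huv, hgcd]; ring
  have := congrArg (fun z : ℤ => (z : ZMod n)) huv'
  push_cast at this
  rw [ZMod.natCast_self] at this
  push_cast
  linear_combination this
/-- The vertex `[b:d]` of `G3(n)` determined by integers `b`, `d` with `gcd(b,d,n) = 1`. -/
def FareyVertex.ofInt (n : ℕ) (b d : ℤ) (h : Int.gcd b (Int.gcd d n) = 1) : FareyVertex n :=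
  FareyVertex.mk n (b : ZMod n) (d : ZMod n) (isCoprime_zmod_of_gcd h)

/-- The number of vertices of the Farey graph `G3(n)`. -/
noncomputable def fareyCard (n : ℕ) : ℕ := Nat.card (FareyVertex n)

/-- The characteristic polynomial of the (real) adjacency matrix of the Farey
graph `G3(n)` (junk value `1` for `n = 0`). -/
noncomputable def fareyCharpoly (n : ℕ) : Polynomial ℝ :=
  if h : n = 0 then 1
  else
    letI : NeZero n := ⟨h⟩
    letI : Fintype (FareyVertex n) := Fintype.ofFinite _
    letI : DecidableEq (FareyVertex n) := Classical.decEq _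
    letI : DecidableRel (FareyGraph n).Adj := Classical.decRel _
    Matrix.charpoly ((FareyGraph n).adjMatrix ℝ)

/-- The spectrum of the Farey graph `G3(n)`: the multiset of real roots, with
multiplicity, of the characteristic polynomial of its adjacency matrix. -/
noncomputable def sp3 (n : ℕ) : Multiset ℝ := (fareyCharpoly n).roots

lemma mk_eq_mk_iff {n : ℕ} {a c b d : ZMod n} {h : IsCoprime a c} {h' : IsCoprime b d} :
    FareyVertex.mk n a c h = FareyVertex.mk n b d h' ↔
      (a = b ∧ c = d) ∨ (a = -b ∧ c = -d) := by
  constructor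
  · intro he
    have h1 := Quotient.exact he
    change (a, c) = (b, d) ∨ (a, c) = -(b, d) at h1
    rcases h1 with h1 | h1
    · exact Or.inl ⟨congrArg Prod.fst h1, congrArg Prod.snd h1⟩
    · refine Or.inr ⟨?_, ?_⟩
      · simpa using congrArg Prod.fst h1
      · simpa using congrArg Prod.snd h1
  · rintro (⟨h1, h2⟩ | ⟨h1, h2⟩)
    · exact Quotient.sound (Or.inl (by simp [Prod.ext_iff, h1, h2]))
    · exact Quotient.sound (Or.inr (by simp [Prod.ext_iff, h1, h2]))

lemma one_ne_zero_zmod {n : ℕ} (hn : 2 ≤ n) : (1 : ZMod n) ≠ 0 := by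
  haveI : Fact (1 < n) := ⟨hn⟩
  exact one_ne_zero

lemma adj_mk_iff {n : ℕ} (hn : 2 ≤ n) {a c b d : ZMod n} {h : IsCoprime a c}
    {h' : IsCoprime b d} :
    (FareyGraph n).Adj (FareyVertex.mk n a c h) (FareyVertex.mk n b d h') ↔
      (a * d - b * c = 1 ∨ a * d - b * c = -1) := by
  constructor
  · rintro ⟨hne, a', c', b', d', ⟨ha', hu⟩, ⟨hb', hv⟩, hdet⟩
    rw [mk_eq_mk_iff] at hu hv
    have key : a * d - b * c = a' * d' - b' * c' ∨
        a * d - b * c = -(a' * d' - b' * c') := by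
      rcases hu with ⟨h1, h2⟩ | ⟨h1, h2⟩ <;> rcases hv with ⟨h3, h4⟩ | ⟨h3, h4⟩ <;>
        rw [h1, h2, h3, h4] <;> [left; right; right; left] <;> ring
    rcases key with hk | hk <;> rcases hdet with hd | hd
    · left; rw [hk, hd]
    · right; rw [hk, hd]
    · right; rw [hk, hd]
    · left; rw [hk, hd, neg_neg]
  · intro hdet
    refine ⟨?_, a, c, b, d, ⟨h, rfl⟩, ⟨h', rfl⟩, hdet⟩
    intro he
    rw [mk_eq_mk_iff] at he
    have hz : a * d - b * c = 0 := by
      rcases he with ⟨h1, h2⟩ | ⟨h1, h2⟩ <;> rw [h1, h2] <;> ring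
    rw [hz] at hdet
    rcases hdet with hd | hd
    · exact one_ne_zero_zmod hn hd.symm
    · exact one_ne_zero_zmod hn (by linear_combination hd)

/-- For `n ≥ 2` and vertices `[a:c]`, `[b:d]` of `G3(n)` with
`ad - bc ≡ 0 (mod n)`, the number of walks of length 2 between `[a:c]` and `[b:d]`
(equivalently, the number of their common neighbours) is `n` if `[a:c] = [b:d]` and `0`
otherwise. -/
theorem stmt7 (n : ℕ) (hn : 2 ≤ n) (a c b d : ℤ)
    (h₁ : Int.gcd a (Int.gcd c n) = 1) (h₂ : Int.gcd b (Int.gcd d n) = 1)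
    (h₀ : (n : ℤ) ∣ a * d - b * c) :
    let u : FareyVertex n := FareyVertex.ofInt n a c h₁
    let v : FareyVertex n := FareyVertex.ofInt n b d h₂
    let W : ℕ := Nat.card {w : FareyVertex n // (FareyGraph n).Adj u w ∧ (FareyGraph n).Adj w v}
    (u = v → W = n) ∧ (u ≠ v → W = 0) := by
  intro u v W
  have hco1 : IsCoprime (a : ZMod n) (c : ZMod n) := isCoprime_zmod_of_gcd h₁
  have hco2 : IsCoprime (b : ZMod n) (d : ZMod n) := isCoprime_zmod_of_gcd h₂
  have hu : u = FareyVertex.mk n (a : ZMod n) (c : ZMod n) hco1 := rfl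
  have hv : v = FareyVertex.mk n (b : ZMod n) (d : ZMod n) hco2 := rfl
  have hdet0 : (a : ZMod n) * (d : ZMod n) - (b : ZMod n) * (c : ZMod n) = 0 := by
    have := (ZMod.intCast_zmod_eq_zero_iff_dvd (a * d - b * c) n).mpr h₀
    push_cast at this
    linear_combination this
  constructor
  · -- u = v → W = n
    intro huv
    obtain ⟨p, q, hpq⟩ := hco1
    set A : ZMod n := (a : ZMod n)
    set C : ZMod n := (c : ZMod n)
    set x₀ : ZMod n := -q with hx₀
    set y₀ : ZMod n := p with hy₀
    have hbase : A * y₀ - x₀ * C = 1 := by rw [hx₀, hy₀]; linear_combination hpq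
    have hc : ∀ t : ZMod n, IsCoprime (x₀ + t * A) (y₀ + t * C) := fun t =>
      ⟨-C, A, by linear_combination hbase⟩
    have hadj1 : ∀ t : ZMod n,
        (FareyGraph n).Adj u (FareyVertex.mk n (x₀ + t * A) (y₀ + t * C) (hc t)) := by
      intro t
      rw [hu]
      exact (adj_mk_iff hn).mpr (Or.inl (by linear_combination hbase))
    have key : ∀ x y : ZMod n, A * y - x * C = 1 →
        ∃ t : ZMod n, x₀ + t * A = x ∧ y₀ + t * C = y := by
      intro x y hd1
      have hker : A * (y - y₀) - (x - x₀) * C = 0 := by linear_combination hd1 - hbase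
      refine ⟨p * (x - x₀) + q * (y - y₀), ?_, ?_⟩
      · linear_combination q * hker + (x - x₀) * hpq
      · linear_combination -p * hker + (y - y₀) * hpq
    let f : ZMod n → {w : FareyVertex n // (FareyGraph n).Adj u w ∧ (FareyGraph n).Adj w v} :=
      fun t => ⟨FareyVertex.mk n (x₀ + t * A) (y₀ + t * C) (hc t),
        hadj1 t, by rw [← huv]; exact ((FareyGraph n).adj_symm (hadj1 t))⟩
    have hbij : Function.Bijective f := by
      constructor
      · intro t t' he
        have he' : FareyVertex.mk n (x₀ + t * A) (y₀ + t * C) (hc t) =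
            FareyVertex.mk n (x₀ + t' * A) (y₀ + t' * C) (hc t') := congrArg Subtype.val he
        rw [mk_eq_mk_iff] at he'
        rcases he' with ⟨h1, h2⟩ | ⟨h1, h2⟩
        · linear_combination p * h1 + q * h2 + (t' - t) * hpq
        · have h2z : (2 : ZMod n) = 0 := by linear_combination A * h2 - C * h1 - 2 * hbase
          have h1' : x₀ + t * A = x₀ + t' * A := by
            linear_combination h1 + (-x₀ - t' * A) * h2z
          have h2' : y₀ + t * C = y₀ + t' * C := by
            linear_combination h2 + (-y₀ - t' * C) * h2z
          linear_combination p * h1' + q * h2' + (t' - t) * hpq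
      · rintro ⟨w, hw1, hw2⟩
        induction w using Quotient.ind with
        | _ pr =>
          obtain ⟨⟨x, y⟩, hxy⟩ := pr
          have hx1 : A * y - x * C = 1 ∨ A * y - x * C = -1 := by
            rw [hu] at hw1
            exact (adj_mk_iff hn).mp hw1
          rcases hx1 with hd | hd
          · obtain ⟨t, hx, hy⟩ := key x y hd
            exact ⟨t, Subtype.ext (mk_eq_mk_iff.mpr (Or.inl ⟨hx, hy⟩))⟩
          · obtain ⟨t, hx, hy⟩ := key (-x) (-y) (by linear_combination -hd)
            refine ⟨t, Subtype.ext (mk_eq_mk_iff.mpr (Or.inr ⟨?_, ?_⟩))⟩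
            · linear_combination hx
            · linear_combination hy
    show Nat.card _ = n
    rw [Nat.card_congr (Equiv.ofBijective f hbij).symm, Nat.card_zmod]
  · -- u ≠ v → W = 0
    intro huv
    have hempty : IsEmpty
        {w : FareyVertex n // (FareyGraph n).Adj u w ∧ (FareyGraph n).Adj w v} := by
      constructor
      rintro ⟨w, hw1, hw2⟩
      induction w using Quotient.ind with
      | _ pr =>
        obtain ⟨⟨x, y⟩, hxy⟩ := pr
        rw [hu] at hw1
        rw [hv] at hw2
        have h1 := (adj_mk_iff hn).mp hw1
        have h2 := (adj_mk_iff hn).mp hw2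
        apply huv
        rw [hu, hv, mk_eq_mk_iff]
        rcases h1 with h1 | h1 <;> rcases h2 with h2 | h2
        · exact Or.inr ⟨by linear_combination -(b:ZMod n) * h1 - (a:ZMod n) * h2 + x * hdet0,
            by linear_combination -(d:ZMod n) * h1 - (c:ZMod n) * h2 + y * hdet0⟩
        · exact Or.inl ⟨by linear_combination (b:ZMod n) * h1 + (a:ZMod n) * h2 - x * hdet0,
            by linear_combination (d:ZMod n) * h1 + (c:ZMod n) * h2 - y * hdet0⟩
        · exact Or.inl ⟨by linear_combination -(b:ZMod n) * h1 - (a:ZMod n) * h2 + x * hdet0,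
            by linear_combination -(d:ZMod n) * h1 - (c:ZMod n) * h2 + y * hdet0⟩
        · exact Or.inr ⟨by linear_combination (b:ZMod n) * h1 + (a:ZMod n) * h2 - x * hdet0,
            by linear_combination (d:ZMod n) * h1 + (c:ZMod n) * h2 - y * hdet0⟩
    show Nat.card _ = 0
    exact Nat.card_of_isEmpty
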